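/- Fix l > 0. Suppose x₀ = (x_{0,1}, x_{0,2}) = G₂ f₀ / l for some f₀ ∈ ℤ² with f₀ ≠ (0,0), and let m ≥ 1 be an integer. If |x_{0,1}| < |y_{m,1}|, then |x_{0,2}| > y_{m,2}. -/

import Mathlib

open Matrix

/-- The generator matrix `G₂` of the 15-degree rotated hexagonal lattice. -/
noncomputable def G₂ : Matrix (Fin 2) (Fin 2) ℝ :=
  !![(Real.sqrt 3 - 1) / (2 * Real.sqrt 2), -(Real.sqrt 3 + 1) / (2 * Real.sqrt 2);
     -(Real.sqrt 3 + 1) / (2 * Real.sqrt 2), (Real.sqrt 3 - 1) / (2 * Real.sqrt 2)]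

/-- The minimum vectors `y_m` for `G₂`: for `m = 2k+1`,
`y_m = (-(√3+1)^(2k+1)/2^(k+3/2), (√3-1)^(2k+1)/2^(k+3/2))/l`, and for `m = 2k+2`,
`y_m = ((√3+1)^(2k+2)/2^(k+3/2), (√3-1)^(2k+2)/2^(k+3/2))/l`. -/
noncomputable def yvec (l : ℝ) (m : ℕ) : ℝ × ℝ :=
  if m % 2 = 1 then
    (-((Real.sqrt 3 + 1) ^ m) / ((2 : ℝ) ^ ((m - 1) / 2) * 2 * Real.sqrt 2) / l,
      ((Real.sqrt 3 - 1) ^ m) / ((2 : ℝ) ^ ((m - 1) / 2) * 2 * Real.sqrt 2) / l)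
  else
    (((Real.sqrt 3 + 1) ^ m) / ((2 : ℝ) ^ (m / 2 - 1) * 2 * Real.sqrt 2) / l,
      ((Real.sqrt 3 - 1) ^ m) / ((2 : ℝ) ^ (m / 2 - 1) * 2 * Real.sqrt 2) / l)

/-- Proposition 1 of He (2017): if `x₀ = G₂ f₀ / l` is a nonzero lattice point with
`|x₀,₁| < |y_{m,1}|`, then `|x₀,₂| > y_{m,2}`. -/
lemma sqrt3_sq : Real.sqrt 3 * Real.sqrt 3 = 3 := Real.mul_self_sqrt (by norm_num)

lemma one_lt_sqrt3 : 1 < Real.sqrt 3 := by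
  nlinarith [sqrt3_sq, Real.sqrt_nonneg 3]

lemma sqrt3_lt_two : Real.sqrt 3 < 2 := by
  nlinarith [sqrt3_sq, Real.sqrt_nonneg 3]

lemma gap : ∀ (k : ℕ) (u v : ℤ), Odd u → Odd v → 3*u^2 - v^2 = 2 →
    ¬ ((2 + Real.sqrt 3)^k ≤ |Real.sqrt 3 * u - v| ∧
       |Real.sqrt 3 * u - v| < 2 * (2 + Real.sqrt 3)^k) := by
  have hs : Real.sqrt 3 * Real.sqrt 3 = 3 := sqrt3_sq
  have hs1 : 1 < Real.sqrt 3 := one_lt_sqrt3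
  have hs2 : Real.sqrt 3 < 2 := sqrt3_lt_two
  set s := Real.sqrt 3 with hsdef
  intro k
  induction k with
  | zero =>
    rintro u v ⟨w, hw⟩ ⟨z, hz⟩ hQ ⟨hlo, hhi⟩
    rw [pow_zero] at hlo hhi
    have hQR : 3*(u:ℝ)^2 - (v:ℝ)^2 = 2 := by exact_mod_cast congrArg (Int.cast : ℤ → ℝ) hQ
    have hAB : (s*u - v) * (s*u + v) = 2 := by linear_combination (u:ℝ)^2 * hs + hQR
    have habs : |s*u - v| * |s*u + v| = 2 := by
      rw [← abs_mul, hAB]; norm_num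
    have ht2 : |s*(u:ℝ) + v| ≤ 2 := by nlinarith [abs_nonneg (s*(u:ℝ) + v)]
    have hsum : |2*(s*(u:ℝ))| ≤ |s*u - v| + |s*u + v| := by
      have : 2*(s*(u:ℝ)) = (s*u - v) + (s*u + v) := by ring
      rw [this]; exact abs_add_le _ _
    have hdiff : |2*(v:ℝ)| ≤ |s*u - v| + |s*u + v| := by
      have h : 2*(v:ℝ) = (s*u + v) + -(s*u - v) := by ring
      calc |2*(v:ℝ)| ≤ |s*u + v| + |-(s*u - v)| := h ▸ abs_add_le _ _
        _ = |s*u - v| + |s*u + v| := by rw [abs_neg]; ring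
    have husmall : |(u:ℝ)| < 2 := by
      rw [abs_mul, abs_mul] at hsum
      have h2 : |(2:ℝ)| = 2 := by norm_num
      have hss : |s| = s := abs_of_pos (by linarith)
      rw [h2, hss] at hsum
      nlinarith [abs_nonneg (u:ℝ)]
    have hvsmall : |(v:ℝ)| < 2 := by
      rw [abs_mul] at hdiff
      have h2 : |(2:ℝ)| = 2 := by norm_num
      rw [h2] at hdiff
      nlinarith
    have hu2 := abs_lt.mp husmall
    have hv2 := abs_lt.mp hvsmall
    have hu2a : -2 < u := by exact_mod_cast hu2.1
    have hu2b : u < 2 := by exact_mod_cast hu2.2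
    have hv2a : -2 < v := by exact_mod_cast hv2.1
    have hv2b : v < 2 := by exact_mod_cast hv2.2
    have hu1 : u = 1 ∨ u = -1 := by omega
    have hv1 : v = 1 ∨ v = -1 := by omega
    rcases hu1 with rfl | rfl <;> rcases hv1 with rfl | rfl <;>
      rcases abs_cases (s*((1:ℤ):ℝ) - ((1:ℤ):ℝ)) with ⟨h,_⟩|⟨h,_⟩ <;>
      rcases abs_cases (s*((1:ℤ):ℝ) - ((-1:ℤ):ℝ)) with ⟨h',_⟩|⟨h',_⟩ <;>
      rcases abs_cases (s*((-1:ℤ):ℝ) - ((1:ℤ):ℝ)) with ⟨h'',_⟩|⟨h'',_⟩ <;>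
      rcases abs_cases (s*((-1:ℤ):ℝ) - ((-1:ℤ):ℝ)) with ⟨h''',_⟩|⟨h''',_⟩ <;>
      push_cast at hlo hhi h h' h'' h''' <;> linarith
  | succ k ih =>
    rintro u v ⟨w, hw⟩ ⟨z, hz⟩ hQ ⟨hlo, hhi⟩
    refine ih (2*u+v) (3*u+2*v) ⟨u+z, by omega⟩ ⟨3*w+v+1, by omega⟩
      (by linear_combination hQ) ⟨?_, ?_⟩
    · have hid : s*((2*u+v : ℤ):ℝ) - ((3*u+2*v : ℤ):ℝ) = (s*u - v)*(2 - s) := by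
        push_cast; linear_combination (u:ℝ) * hs
      rw [hid, abs_mul, abs_of_pos (by linarith : (0:ℝ) < 2 - s)]
      have hunit : (2+s)*(2-s) = 1 := by linear_combination -hs
      calc (2+s)^k = (2+s)^(k+1) * (2-s) := by
            rw [pow_succ]; nlinarith [pow_nonneg (by linarith : (0:ℝ) ≤ 2+s) k]
        _ ≤ |s*u - v| * (2-s) := by
            exact mul_le_mul_of_nonneg_right hlo (by linarith)
    · have hid : s*((2*u+v : ℤ):ℝ) - ((3*u+2*v : ℤ):ℝ) = (s*u - v)*(2 - s) := by
        push_cast; linear_combination (u:ℝ) * hs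
      rw [hid, abs_mul, abs_of_pos (by linarith : (0:ℝ) < 2 - s)]
      have hunit : (2+s)*(2-s) = 1 := by linear_combination -hs
      calc |s*u - v| * (2-s) < (2 * (2+s)^(k+1)) * (2-s) :=
            mul_lt_mul_of_pos_right hhi (by linarith)
        _ = 2 * (2+s)^k := by rw [pow_succ]; nlinarith [pow_nonneg (by linarith : (0:ℝ) ≤ 2+s) k]

lemma main_ineq' {A B R T : ℝ} (hT : 0 < T) (hR : 0 < R) (hA : |A| < R)
    (hprod : T * R ≤ |A| * |B|) : T < |B| := by
  have h0 : 0 < |A| * |B| := lt_of_lt_of_le (by positivity) hprod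
  have hB : 0 < |B| := by
    rcases (abs_nonneg B).lt_or_eq with h | h
    · exact h
    · exfalso; nlinarith [abs_nonneg A]
  nlinarith [mul_lt_mul_of_pos_right hA hB]


theorem minimum_vectors_characterize
    (l : ℝ) (hl : 0 < l) (f₀ : Fin 2 → ℤ) (hf₀ : f₀ ≠ 0)
    (x₀ : ℝ × ℝ)
    (hx : x₀ = (G₂.mulVec (fun i => (f₀ i : ℝ)) 0 / l,
                G₂.mulVec (fun i => (f₀ i : ℝ)) 1 / l))
    (m : ℕ) (hm : 1 ≤ m)
    (h1 : |x₀.1| < |(yvec l m).1|) :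
    (yvec l m).2 < |x₀.2| := by
  have hs : Real.sqrt 3 * Real.sqrt 3 = 3 := sqrt3_sq
  have hs1 : 1 < Real.sqrt 3 := by nlinarith [Real.sqrt_nonneg 3]
  have hs2 : Real.sqrt 3 < 2 := by nlinarith [Real.sqrt_nonneg 3]
  set s := Real.sqrt 3 with hsdef
  have h2p : (0:ℝ) < Real.sqrt 2 := Real.sqrt_pos.mpr (by norm_num)
  obtain ⟨D, hDdef⟩ : ∃ D:ℝ, D = 2 * Real.sqrt 2 * l := ⟨_, rfl⟩
  have hDpos : 0 < D := by rw [hDdef]; positivity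
  obtain ⟨u, hudef⟩ : ∃ u:ℤ, u = f₀ 0 - f₀ 1 := ⟨_, rfl⟩
  obtain ⟨v, hvdef⟩ : ∃ v:ℤ, v = f₀ 0 + f₀ 1 := ⟨_, rfl⟩
  obtain ⟨Q, hQdef⟩ : ∃ Q:ℤ, Q = 3 * u ^ 2 - v ^ 2 := ⟨_, rfl⟩
  have hur : (u:ℝ) = (f₀ 0 : ℝ) - (f₀ 1 : ℝ) := by rw [hudef]; push_cast; ring
  have hvr : (v:ℝ) = (f₀ 0 : ℝ) + (f₀ 1 : ℝ) := by rw [hvdef]; push_cast; ring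
  have hQr : (Q:ℝ) = 3 * (u:ℝ)^2 - (v:ℝ)^2 := by rw [hQdef]; push_cast; ring
  have huv : ¬ (u = 0 ∧ v = 0) := by
    rintro ⟨h0, h0'⟩
    apply hf₀
    funext i
    fin_cases i <;> simp <;> omega
  have hx1 : x₀.1 = (s * u - v) / D := by
    rw [hx]
    show G₂.mulVec _ 0 / l = _
    simp only [G₂, Matrix.mulVec, dotProduct, Fin.sum_univ_two,
      Matrix.cons_val', Matrix.cons_val_zero, Matrix.empty_val',
      Matrix.cons_val_fin_one, Matrix.cons_val_one, Matrix.head_cons,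
      Matrix.head_fin_const, Matrix.of_apply]
    rw [hur, hvr, hDdef]
    field_simp
    ring
  have hx2 : x₀.2 = -((s * u + v) / D) := by
    rw [hx]
    show G₂.mulVec _ 1 / l = _
    simp only [G₂, Matrix.mulVec, dotProduct, Fin.sum_univ_two,
      Matrix.cons_val', Matrix.cons_val_zero, Matrix.empty_val',
      Matrix.cons_val_fin_one, Matrix.cons_val_one, Matrix.head_cons,
      Matrix.head_fin_const, Matrix.of_apply]
    rw [hur, hvr, hDdef]
    field_simp
    ring
  have hABQ : (s * u - v) * (s * u + v) = (Q : ℝ) := by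
    rw [hQr]; linear_combination (u:ℝ)^2 * hs
  have habs1 : |x₀.1| = |s * u - v| / D := by rw [hx1, abs_div, abs_of_pos hDpos]
  have habs2 : |x₀.2| = |s * u + v| / D := by rw [hx2, abs_neg, abs_div, abs_of_pos hDpos]
  have hQ0 : Q ≠ 0 := by
    intro h
    have hu0 : u ≠ 0 := by
      rintro h0
      rw [h0] at hQdef
      have hv2 : v ^ 2 = 0 := by omega
      exact huv ⟨h0, by exact pow_eq_zero_iff two_ne_zero |>.mp hv2⟩
    have hu' : (u:ℝ) ≠ 0 := Int.cast_ne_zero.mpr hu0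
    have hvv : v ^ 2 = 3 * u ^ 2 := by omega
    have h3 : ((v:ℝ)/(u:ℝ))^2 = 3 := by
      field_simp
      exact_mod_cast hvv.trans (mul_comm _ _)
    have h4 : s = |(v:ℝ)/(u:ℝ)| := by
      rw [hsdef, ← Real.sqrt_sq_eq_abs, h3]
    have hirr : Irrational (Real.sqrt 3) := by
      have := Nat.prime_three.irrational_sqrt
      simpa using this
    apply hirr
    refine ⟨|(v:ℚ)/(u:ℚ)|, ?_⟩
    rw [← hsdef, h4]
    push_cast
    ring
  have key : 2 ≤ |Q| ∧ (Q ≠ 2 → 4 ≤ |Q|) ∧ (Q = 2 → Odd u ∧ Odd v) := by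
    rcases Int.even_or_odd u with ⟨w, hw⟩ | ⟨w, hw⟩
    · obtain ⟨z, hz⟩ : ∃ z, v = z + z := ⟨w + f₀ 1, by omega⟩
      obtain ⟨c, hceq⟩ : ∃ c:ℤ, c = 3 * w ^ 2 - z ^ 2 := ⟨_, rfl⟩
      have hc : Q = 4 * c := by rw [hQdef, hw, hz, hceq]; ring
      have hc0 : c ≠ 0 := by intro h; rw [h] at hc; simp at hc; exact hQ0 hc
      refine ⟨?_, fun _ => ?_, fun h => ?_⟩
      · rcases abs_cases Q with ⟨h,_⟩|⟨h,_⟩ <;> omega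
      · rcases abs_cases Q with ⟨h,_⟩|⟨h,_⟩ <;> omega
      · omega
    · obtain ⟨z, hz⟩ : ∃ z, v = 2*z + 1 := ⟨w + f₀ 1, by omega⟩
      obtain ⟨c, hcc⟩ := Int.even_mul_succ_self w
      obtain ⟨d, hdd⟩ := Int.even_mul_succ_self z
      have hQf : Q = 8 * (3*c - d) + 2 := by
        rw [hQdef, hw, hz]; linear_combination (12:ℤ) * hcc - 4 * hdd
      refine ⟨?_, fun h => ?_, fun h => ⟨⟨w, hw⟩, ⟨z, hz⟩⟩⟩
      · rcases abs_cases Q with ⟨h,_⟩|⟨h,_⟩ <;> omega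
      · rcases abs_cases Q with ⟨h',_⟩|⟨h',_⟩ <;> omega
  have hABabs : |s * u - v| * |s * u + v| = ((|Q| : ℤ) : ℝ) := by
    rw [← abs_mul, hABQ, Int.cast_abs]
  rcases Nat.even_or_odd m with hme | hmo
  · -- m even
    obtain ⟨k', hk'⟩ := hme
    obtain ⟨k, hk⟩ : ∃ k, m = 2*k + 2 := ⟨k' - 1, by omega⟩
    have hm2 : ¬ (m % 2 = 1) := by omega
    have hkk : m / 2 - 1 = k := by omega
    have hy1 : (yvec l m).1 = ((s+1)^m / 2^k) / D := by
      simp only [yvec, if_neg hm2, hkk, hDdef, ← hsdef]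
      rw [div_div, div_div]
      congr 1
      ring
    have hy2 : (yvec l m).2 = ((s-1)^m / 2^k) / D := by
      simp only [yvec, if_neg hm2, hkk, hDdef, ← hsdef]
      rw [div_div, div_div]
      congr 1
      ring
    have hRpos : (0:ℝ) < (s+1)^m / 2^k :=
      div_pos (pow_pos (by linarith) _) (by positivity)
    have hTpos : (0:ℝ) < (s-1)^m / 2^k :=
      div_pos (pow_pos (by linarith) _) (by positivity)
    have hA : |s * u - v| < (s+1)^m / 2^k := by
      rw [habs1, hy1, abs_div, abs_of_pos hDpos, abs_of_pos hRpos,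
        div_lt_div_iff₀ hDpos hDpos] at h1
      exact lt_of_mul_lt_mul_right h1 (le_of_lt hDpos)
    rw [hy2, habs2, div_lt_div_iff₀ hDpos hDpos]
    refine mul_lt_mul_of_pos_right ?_ hDpos
    by_cases hQ2 : Q = 2
    · obtain ⟨hu, hv⟩ := key.2.2 hQ2
      have hQint : 3*u^2 - v^2 = 2 := by omega
      have h2s : (s+1)^2 = 2*(2+s) := by linear_combination hs
      have h2t : (s-1)^2 = 2*(2-s) := by linear_combination hs
      have hpm : ∀ c : ℝ, c^m = (c^2)^(k+1) := by
        intro c; rw [← pow_mul, hk]; ring_nf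
      have hR2 : (s+1)^m / 2^k = 2*(2+s)^(k+1) := by
        rw [hpm, h2s, mul_pow, pow_succ]
        field_simp
      have hT2 : (s-1)^m / 2^k = 2*(2-s)^(k+1) := by
        rw [hpm, h2t, mul_pow, pow_succ]
        field_simp
      have hgap := gap (k+1) u v hu hv hQint
      rw [← hsdef] at hgap
      rw [hR2] at hA
      have hP : |s * u - v| < (2+s)^(k+1) := by
        by_contra hcon
        push_neg at hcon
        exact hgap ⟨hcon, hA⟩
      have hPpos : (0:ℝ) < (2+s)^(k+1) := pow_pos (by linarith) _
      rw [hT2]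
      refine main_ineq' (R := (2+s)^(k+1))
        (mul_pos two_pos (pow_pos (by linarith) _)) hPpos hP ?_
      have hTP : (2*(2-s)^(k+1)) * (2+s)^(k+1) = 2 := by
        rw [mul_assoc, ← mul_pow]
        have h1' : (2-s)*(2+s) = 1 := by linear_combination -hs
        rw [h1', one_pow, mul_one]
      rw [hTP, hABabs, hQ2]
      norm_num
    · have h4 : 4 ≤ |Q| := key.2.1 hQ2
      refine main_ineq' hTpos hRpos hA ?_
      have hTR : ((s-1)^m / 2^k) * ((s+1)^m / 2^k) = 4 := by
        rw [div_mul_div_comm, ← mul_pow]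
        have h2 : (s-1)*(s+1) = 2 := by linear_combination hs
        rw [h2]
        have h2m : (2:ℝ)^m = (2^k * 2^k) * 4 := by
          rw [hk, pow_add, two_mul, pow_add]
          norm_num
        rw [h2m]
        field_simp
      rw [hTR, hABabs]
      exact_mod_cast h4
  · -- m odd
    obtain ⟨k, hk⟩ := hmo
    have hm2 : m % 2 = 1 := by omega
    have hkk : (m - 1) / 2 = k := by omega
    have hy1 : (yvec l m).1 = -(((s+1)^m / 2^k) / D) := by
      simp only [yvec, if_pos hm2, hkk, hDdef, ← hsdef]
      rw [div_div, div_div]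
      rw [neg_div]
      congr 2
      ring
    have hy2 : (yvec l m).2 = ((s-1)^m / 2^k) / D := by
      simp only [yvec, if_pos hm2, hkk, hDdef, ← hsdef]
      rw [div_div, div_div]
      congr 1
      ring
    have hRpos : (0:ℝ) < (s+1)^m / 2^k :=
      div_pos (pow_pos (by linarith) _) (by positivity)
    have hTpos : (0:ℝ) < (s-1)^m / 2^k :=
      div_pos (pow_pos (by linarith) _) (by positivity)
    have hA : |s * u - v| < (s+1)^m / 2^k := by
      rw [habs1, hy1, abs_neg, abs_div, abs_of_pos hDpos, abs_of_pos hRpos,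
        div_lt_div_iff₀ hDpos hDpos] at h1
      exact lt_of_mul_lt_mul_right h1 (le_of_lt hDpos)
    rw [hy2, habs2, div_lt_div_iff₀ hDpos hDpos]
    refine mul_lt_mul_of_pos_right ?_ hDpos
    refine main_ineq' hTpos hRpos hA ?_
    have hTR : ((s-1)^m / 2^k) * ((s+1)^m / 2^k) = 2 := by
      rw [div_mul_div_comm, ← mul_pow]
      have h2 : (s-1)*(s+1) = 2 := by linear_combination hs
      rw [h2]
      have h2m : (2:ℝ)^m = (2^k * 2^k) * 2 := by
        rw [hk, pow_add, two_mul, pow_add]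
        norm_num
      rw [h2m]
      field_simp
    rw [hTR, hABabs]
    exact_mod_cast key.1
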